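/- Let (X,d) be a finite ultrametric space with |X| ≥ 2 such that |Sp(X)| = |X|. Then every nonempty subspace Y of X also satisfies |Sp(Y)| = |Y|. -/

import Mathlib

/-- An ultrametric on a type `X`. -/
def IsUltrametricOn {X : Type*} (d : X → X → ℝ) : Prop :=
  (∀ x y, 0 ≤ d x y) ∧ (∀ x y, d x y = d y x) ∧ (∀ x y, d x y = 0 ↔ x = y) ∧
    ∀ x y z, d x y ≤ max (d x z) (d z y)

/-- The spectrum of a subset `Y` of an ultrametric space: distances between points of `Y`. -/
def spectrumOn {X : Type*} (d : X → X → ℝ) (Y : Set X) : Set ℝ :=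
  {r | ∃ x ∈ Y, ∃ y ∈ Y, d x y = r}

section Aux

variable {X : Type*} [Fintype X] {d : X → X → ℝ}

lemma spectrumOn_finite (d : X → X → ℝ) (Y : Set X) : (spectrumOn d Y).Finite := by
  apply Set.Finite.subset (Set.finite_range (fun p : X × X => d p.1 p.2))
  rintro r ⟨x, hx, y, hy, rfl⟩
  exact ⟨(x, y), rfl⟩

lemma removal (hd : IsUltrametricOn d) {S : Set X} {x : X} (hx : x ∈ S)
    (hne : (S \ {x}).Nonempty) :
    ∃ m, spectrumOn d S ⊆ spectrumOn d (S \ {x}) ∪ {m} := by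
  obtain ⟨pos, symm, eq0, ultra⟩ := hd
  obtain ⟨y0, hy0, hmin⟩ := Set.exists_min_image (S \ {x}) (d x) (Set.toFinite _) hne
  refine ⟨d x y0, ?_⟩
  have key : ∀ c, c ∈ S \ {x} → d x c ∈ spectrumOn d (S \ {x}) ∪ {d x y0} := by
    intro c hc
    by_cases hcm : d x c = d x y0
    · right; exact hcm
    · left
      have hlt : d x y0 < d x c := lt_of_le_of_ne (hmin c hc) (Ne.symm hcm)
      refine ⟨y0, hy0, c, hc, ?_⟩
      have h1 : d y0 c ≤ d x c := by
        have h := ultra y0 c x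
        rw [symm y0 x] at h
        exact h.trans (max_le hlt.le le_rfl)
      have h2 : d x c ≤ d y0 c := by
        by_contra h
        push_neg at h
        have hmx : max (d x y0) (d y0 c) < d x c := max_lt hlt h
        linarith [ultra x c y0]
      linarith
  rintro r ⟨a, ha, b, hb, rfl⟩
  by_cases hax : a = x
  · by_cases hbx : b = x
    · left
      refine ⟨y0, hy0, y0, hy0, ?_⟩
      rw [(eq0 y0 y0).mpr rfl, hax, hbx, (eq0 x x).mpr rfl]
    · rw [hax]
      exact key b ⟨hb, hbx⟩
  · by_cases hbx : b = x
    · rw [hbx, symm a x]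
      exact key a ⟨ha, hax⟩
    · left
      exact ⟨a, ⟨ha, hax⟩, b, ⟨hb, hbx⟩, rfl⟩

lemma spec_le (hd : IsUltrametricOn d) : ∀ n (S : Set X), S.ncard = n →
    (spectrumOn d S).ncard ≤ n := by
  intro n
  induction n with
  | zero =>
    intro S hS
    have hSe : S = ∅ := (Set.ncard_eq_zero (Set.toFinite S)).mp hS
    have : spectrumOn d S = ∅ := by
      ext r
      simp only [Set.mem_empty_iff_false, iff_false]
      rintro ⟨a, ha, _⟩
      rw [hSe] at ha; exact ha
    simp [this]
  | succ n ih =>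
    intro S hS
    have hSne : S.Nonempty := by
      rw [← Set.ncard_pos (Set.toFinite S)] at *
      omega
    obtain ⟨x, hx⟩ := hSne
    by_cases hne : (S \ {x}).Nonempty
    · obtain ⟨m, hsub⟩ := removal hd hx hne
      have h1 : (spectrumOn d S).ncard ≤ (spectrumOn d (S \ {x})).ncard + 1 := by
        calc (spectrumOn d S).ncard ≤ (spectrumOn d (S \ {x}) ∪ {m}).ncard :=
              Set.ncard_le_ncard hsub ((spectrumOn_finite d _).union (Set.finite_singleton m))
          _ ≤ (spectrumOn d (S \ {x})).ncard + ({m} : Set ℝ).ncard :=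
              Set.ncard_union_le _ _
          _ = (spectrumOn d (S \ {x})).ncard + 1 := by rw [Set.ncard_singleton]
      have hS' : (S \ {x}).ncard = n := by
        rw [Set.ncard_diff_singleton_of_mem hx, hS]; omega
      have := ih (S \ {x}) hS'
      omega
    · have hsub : spectrumOn d S ⊆ {d x x} := by
        rintro r ⟨a, ha, b, hb, rfl⟩
        have haS : a = x := by
          by_contra h
          exact hne ⟨a, ha, h⟩
        have hbS : b = x := by
          by_contra h
          exact hne ⟨b, hb, h⟩
        subst haS; subst hbS; rfl
      calc (spectrumOn d S).ncard ≤ ({d x x} : Set ℝ).ncard :=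
            Set.ncard_le_ncard hsub (Set.finite_singleton _)
        _ = 1 := Set.ncard_singleton _
        _ ≤ n + 1 := by omega

lemma main_aux (hd : IsUltrametricOn d) {Y : Set X} (hY : Y.Nonempty) :
    ∀ n (S : Set X), Y ⊆ S → S.ncard = n → (spectrumOn d S).ncard = n →
      (spectrumOn d Y).ncard = Y.ncard := by
  intro n
  induction n using Nat.strong_induction_on with
  | _ n ih =>
    intro S hYS hSn hSpn
    by_cases hSY : S ⊆ Y
    · have : S = Y := Set.Subset.antisymm hSY hYS
      subst this
      rw [hSpn, hSn]
    · obtain ⟨x, hxS, hxY⟩ := Set.not_subset.mp hSY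
      have hYS' : Y ⊆ S \ {x} := fun y hy =>
        ⟨hYS hy, fun h => hxY (h ▸ hy)⟩
      have hne : (S \ {x}).Nonempty := hY.mono hYS'
      have hnpos : 1 ≤ n := by
        have : 0 < S.ncard := (Set.ncard_pos (Set.toFinite S)).mpr ⟨x, hxS⟩
        omega
      have hS' : (S \ {x}).ncard = n - 1 := by
        rw [Set.ncard_diff_singleton_of_mem hxS, hSn]
      obtain ⟨m, hsub⟩ := removal hd hxS hne
      have hub : (spectrumOn d (S \ {x})).ncard ≤ n - 1 := spec_le hd (n - 1) _ hS'
      have hlb : n ≤ (spectrumOn d (S \ {x})).ncard + 1 := by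
        calc n = (spectrumOn d S).ncard := hSpn.symm
          _ ≤ (spectrumOn d (S \ {x}) ∪ {m}).ncard :=
              Set.ncard_le_ncard hsub ((spectrumOn_finite d _).union (Set.finite_singleton m))
          _ ≤ (spectrumOn d (S \ {x})).ncard + ({m} : Set ℝ).ncard :=
              Set.ncard_union_le _ _
          _ = (spectrumOn d (S \ {x})).ncard + 1 := by rw [Set.ncard_singleton]
      have heq : (spectrumOn d (S \ {x})).ncard = n - 1 := by omega
      exact ih (n - 1) (by omega) (S \ {x}) hYS' hS' heq

end Aux

/-- If a finite ultrametric space `X` with `|X| ≥ 2` satisfies `|Sp(X)| = |X|`, then every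
nonempty subspace `Y` of `X` satisfies `|Sp(Y)| = |Y|`. -/
theorem gomory_hu_extremal_hereditary {X : Type*} [Fintype X] (d : X → X → ℝ)
    (hd : IsUltrametricOn d) (hcard : 2 ≤ Fintype.card X)
    (hX : (spectrumOn d (Set.univ : Set X)).ncard = Fintype.card X)
    (Y : Set X) (hY : Y.Nonempty) :
    (spectrumOn d Y).ncard = Y.ncard := by
  exact main_aux hd hY (Fintype.card X) Set.univ (Set.subset_univ Y)
    (by rw [Set.ncard_univ, Nat.card_eq_fintype_card]) hX
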